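/- For every finite graph G, the symmetric lettericity of G is at most its neighborhood diversity: sl(G) ≤ nd(G). -/

import Mathlib

/-- The letter graph `G(D, w)` on vertex set `Fin w.length`: positions `i < j`
are adjacent iff the ordered pair of letters `(w_i, w_j)` lies in the decoder `D`. -/
def letterGraph {A : Type*} (D : Set (A × A)) (w : List A) : SimpleGraph (Fin w.length) where
  Adj i j := (i < j ∧ (w.get i, w.get j) ∈ D) ∨ (j < i ∧ (w.get j, w.get i) ∈ D)
  symm := ⟨by intro i j h; exact h.symm⟩
  loopless := ⟨by intro i h; rcases h with ⟨h, -⟩ | ⟨h, -⟩ <;> exact lt_irrefl _ h⟩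

/-- The lettericity of a finite graph `G`: the smallest `k` such that `G` is
isomorphic to a letter graph over an alphabet of size `k`. -/
noncomputable def lettericity {V : Type*} [Fintype V] (G : SimpleGraph V) : ℕ :=
  sInf {k : ℕ | ∃ (D : Set (Fin k × Fin k)) (w : List (Fin k)),
    w.length = Fintype.card V ∧ Nonempty (G ≃g letterGraph D w)}

/-- The symmetric lettericity of a finite graph `G`: the smallest `k` such that
`G` is isomorphic to a letter graph over an alphabet of size `k` with a symmetric
decoder. -/
noncomputable def symLettericity {V : Type*} [Fintype V] (G : SimpleGraph V) : ℕ :=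
  sInf {k : ℕ | ∃ (D : Set (Fin k × Fin k)) (w : List (Fin k)),
    (∀ x y : Fin k, (x, y) ∈ D ↔ (y, x) ∈ D) ∧
    w.length = Fintype.card V ∧ Nonempty (G ≃g letterGraph D w)}

/-- The neighborhood diversity of a finite graph `G`: the smallest number of parts
of a partition of the vertex set such that any two distinct vertices in the same
part are generalized twins (`N(u) \ {v} = N(v) \ {u}`). -/
noncomputable def neighborhoodDiversity {V : Type*} [Fintype V] [DecidableEq V]
    (G : SimpleGraph V) : ℕ :=
  sInf {p : ℕ | ∃ P : Finpartition (Finset.univ : Finset V), P.parts.card = p ∧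
    ∀ s ∈ P.parts, ∀ u ∈ s, ∀ v ∈ s, u ≠ v →
      G.neighborSet u \ {v} = G.neighborSet v \ {u}}

/-- The symmetric lettericity of a finite graph is at most its neighborhood
diversity. -/
theorem symLettericity_le_neighborhoodDiversity {V : Type*} [Fintype V] [DecidableEq V]
    (G : SimpleGraph V) :
    symLettericity G ≤ neighborhoodDiversity G := by
  classical
  -- The defining set for neighborhood diversity is nonempty (discrete partition).
  have hne : {p : ℕ | ∃ P : Finpartition (Finset.univ : Finset V), P.parts.card = p ∧
      ∀ s ∈ P.parts, ∀ u ∈ s, ∀ v ∈ s, u ≠ v →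
        G.neighborSet u \ {v} = G.neighborSet v \ {u}}.Nonempty := by
    refine ⟨(⊥ : Finpartition (Finset.univ : Finset V)).parts.card, ⊥, rfl, ?_⟩
    intro s hs u hu v hv huv
    rw [Finpartition.mem_bot_iff] at hs
    obtain ⟨a, -, rfl⟩ := hs
    simp only [Finset.mem_singleton] at hu hv
    exact absurd (hu.trans hv.symm) huv
  obtain ⟨P, hcard, htwin⟩ := Nat.sInf_mem hne
  apply Nat.sInf_le
  set p := neighborhoodDiversity G with hp
  -- letters: index of the part containing a vertex
  let e : {x // x ∈ P.parts} ≃ Fin p := P.parts.equivFinOfCardEq hcard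
  let ℓ : V → Fin p := fun v => e ⟨P.part v, P.part_mem.2 (Finset.mem_univ v)⟩
  have hℓpart : ∀ a b : V, ℓ a = ℓ b → P.part a = P.part b := by
    intro a b hab
    have := e.injective hab
    exact congrArg Subtype.val this
  -- twin transfer
  have htr : ∀ a b z : V, ℓ a = ℓ b → z ≠ a → z ≠ b → (G.Adj a z ↔ G.Adj b z) := by
    intro a b z hab hza hzb
    rcases eq_or_ne a b with rfl | hne'
    · exact Iff.rfl
    · have hpartEq := hℓpart a b hab
      have hb : b ∈ P.part a := hpartEq ▸ P.mem_part (Finset.mem_univ b)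
      have hs := htwin (P.part a) (P.part_mem.2 (Finset.mem_univ a)) a
        (P.mem_part (Finset.mem_univ a)) b hb hne'
      have h1 : z ∈ G.neighborSet a \ {b} ↔ z ∈ G.neighborSet b \ {a} := by rw [hs]
      simpa [SimpleGraph.mem_neighborSet, hza, hzb] using h1
  -- the decoder
  let D : Set (Fin p × Fin p) :=
    {ab | ∃ x y : V, ℓ x = ab.1 ∧ ℓ y = ab.2 ∧ x ≠ y ∧ G.Adj x y}
  have hDsymm : ∀ x y : Fin p, (x, y) ∈ D ↔ (y, x) ∈ D := by
    intro x y
    constructor <;> rintro ⟨a, b, h1, h2, hne', hadj⟩ <;>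
      exact ⟨b, a, h2, h1, hne'.symm, hadj.symm⟩
  -- the key adjacency characterization
  have key : ∀ u v : V, u ≠ v → (G.Adj u v ↔ (ℓ u, ℓ v) ∈ D) := by
    intro u v huv
    constructor
    · intro h; exact ⟨u, v, rfl, rfl, huv, h⟩
    · rintro ⟨x, y, hx, hy, hxy, hadj⟩
      simp only at hx hy
      by_cases hyu : y = u
      · -- same part case (u and v have the same letter would follow, handle directly)
        subst hyu
        -- x ≠ y(=u), Adj x u; letters: ℓ x = ℓ u, so all in same part as u; ℓ? v
        -- use transfer x → v is not direct; instead: ℓ y = ℓ v means ℓ u = ℓ v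
        -- step: every z ≠ u with ℓ z = ℓ u is adjacent to u
        rcases eq_or_ne v x with rfl | hvx
        · exact hadj.symm
        · have := htr x v y (hx.trans hy) (Ne.symm hxy) huv
          exact (this.mp hadj).symm
      · have h1 : G.Adj u y := (htr x u y hx (Ne.symm hxy) hyu).mp hadj
        have h2 := (htr y v u hy (Ne.symm hyu) huv).mp h1.symm
        exact h2.symm
  -- build the word
  set n := Fintype.card V with hn
  let φ : V ≃ Fin n := Fintype.equivFin V
  let w : List (Fin p) := List.ofFn (fun i : Fin n => ℓ (φ.symm i))
  have hw : w.length = n := List.length_ofFn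
  refine ⟨D, w, hDsymm, hw, ⟨?_⟩⟩
  let ψ : V ≃ Fin w.length := φ.trans (finCongr hw.symm)
  have hget : ∀ u : V, w.get (ψ u) = ℓ u := by
    intro u
    simp [w, ψ, List.get_ofFn, finCongr, Fin.cast]
  have hψne : ∀ u v : V, u ≠ v → ψ u ≠ ψ v := fun u v h hc => h (ψ.injective hc)
  refine ⟨ψ, ?_⟩
  intro u v
  show ((ψ u < ψ v ∧ (w.get (ψ u), w.get (ψ v)) ∈ D) ∨
      (ψ v < ψ u ∧ (w.get (ψ v), w.get (ψ u)) ∈ D)) ↔ G.Adj u v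
  rw [hget u, hget v]
  constructor
  · rintro (⟨hlt, hD⟩ | ⟨hlt, hD⟩)
    · have hne' : u ≠ v := fun h => by subst h; exact lt_irrefl _ hlt
      exact (key u v hne').mpr hD
    · have hne' : v ≠ u := fun h => by subst h; exact lt_irrefl _ hlt
      exact ((key v u hne').mpr hD).symm
  · intro hadj
    rcases lt_or_gt_of_ne (hψne u v hadj.ne) with h | h
    · exact Or.inl ⟨h, (key u v hadj.ne).mp hadj⟩
    · exact Or.inr ⟨h, (key v u hadj.ne').mp hadj.symm⟩
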